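/- Every non-Abelian four-dimensional nilpotent complex Jordan algebra whose center has dimension 3 is isomorphic to the algebra with single nonzero product φ(e₁,e₁)=e₂. -/

import Mathlib

/-- Bilinearity of a plain product. -/
def IsBilin (K : Type*) [Field K] {V : Type*} [AddCommGroup V] [Module K V]
    (φ : V → V → V) : Prop :=
  (∀ (a : K) (x y z : V), φ (a • x + y) z = a • φ x z + φ y z) ∧
  (∀ (a : K) (x y z : V), φ x (a • y + z) = a • φ x y + φ x z)

/-- Commutativity (symmetry) of the product. -/
def IsComm {V : Type*} (φ : V → V → V) : Prop := ∀ x y, φ x y = φ y x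

/-- The Jordan identity. -/
def JordanId {V : Type*} (φ : V → V → V) : Prop :=
  ∀ x y, φ (φ x x) (φ x y) = φ x (φ (φ x x) y)

/-- Lower central series: `lcs K φ 0 = C¹ = V`, and `lcs K φ m` is the term `C^{m+1}`. -/
def lcs (K : Type*) [Field K] {V : Type*} [AddCommGroup V] [Module K V]
    (φ : V → V → V) : ℕ → Submodule K V
  | 0 => ⊤
  | m + 1 => Submodule.span K {z | ∃ x ∈ lcs K φ m, ∃ y, z = φ x y}

/-- Nilpotency: some term of the lower central series vanishes. -/
def IsNilp (K : Type*) [Field K] {V : Type*} [AddCommGroup V] [Module K V]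
    (φ : V → V → V) : Prop := ∃ k, lcs K φ k = ⊥
/-- every non-Abelian 4-dimensional nilpotent complex Jordan algebra
with 3-dimensional center is isomorphic to the algebra with single nonzero product
φ(e₁,e₁)=e₂. -/
theorem dim_four_center_three_classification
    {V : Type*} [AddCommGroup V] [Module ℂ V] (φ : V → V → V)
    (hbil : IsBilin ℂ φ) (hcomm : IsComm φ) (hjord : JordanId φ)
    (hnilp : IsNilp ℂ φ) (hdim : Module.finrank ℂ V = 4)
    (hnonab : ∃ x y : V, φ x y ≠ 0)
    (Z : Submodule ℂ V) (hZ : ∀ x : V, x ∈ Z ↔ ∀ y : V, φ x y = 0)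
    (hZdim : Module.finrank ℂ Z = 3) :
    ∃ e : Module.Basis (Fin 4) ℂ V, φ (e 0) (e 0) = e 1 ∧
      ∀ i j : Fin 4, (i, j) ≠ (0, 0) → φ (e i) (e j) = 0 := by
  classical
  obtain ⟨hb1, hb2⟩ := hbil
  have hfin : FiniteDimensional ℂ V :=
    FiniteDimensional.of_finrank_pos (by rw [hdim]; norm_num)
  -- pick e₀ ∉ Z
  have hZne : Z ≠ ⊤ := by
    intro h
    rw [h, finrank_top, hdim] at hZdim
    norm_num at hZdim
  obtain ⟨e₀, he₀⟩ : ∃ e₀ : V, e₀ ∉ Z := by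
    by_contra h
    push_neg at h
    exact hZne (Submodule.eq_top_iff'.mpr h)
  -- Z ⊔ span e₀ = ⊤
  have hsup : Z ⊔ (ℂ ∙ e₀) = ⊤ := by
    apply Submodule.eq_top_of_finrank_eq
    have hlt : Z < Z ⊔ (ℂ ∙ e₀) := by
      refine lt_of_le_of_ne le_sup_left ?_
      intro h
      exact he₀ (h ▸ (le_sup_right (a := Z)
        (Submodule.mem_span_singleton_self e₀)))
    have h1 : Module.finrank ℂ Z < Module.finrank ℂ ↥(Z ⊔ ℂ ∙ e₀) :=
      Submodule.finrank_lt_finrank_of_lt hlt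
    have h2 : Module.finrank ℂ ↥(Z ⊔ ℂ ∙ e₀) ≤ Module.finrank ℂ V :=
      Submodule.finrank_le _
    omega
  have decomp : ∀ x : V, ∃ (z : V) (a : ℂ), z ∈ Z ∧ x = z + a • e₀ := by
    intro x
    have hx : x ∈ Z ⊔ (ℂ ∙ e₀) := hsup ▸ Submodule.mem_top
    rw [Submodule.mem_sup] at hx
    obtain ⟨z, hz, u, hu, hzu⟩ := hx
    rw [Submodule.mem_span_singleton] at hu
    obtain ⟨a, rfl⟩ := hu
    exact ⟨z, a, hz, hzu.symm⟩
  set w : V := φ e₀ e₀ with hw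
  have hzero : ∀ z y : V, z ∈ Z → φ z y = 0 := fun z y hz => (hZ z).mp hz y
  have hprod : ∀ (a b : ℂ) (z z' : V), z ∈ Z → z' ∈ Z →
      φ (z + a • e₀) (z' + b • e₀) = (a * b) • w := by
    intro a b z z' hz hz'
    rw [add_comm z, add_comm z', hb1, hzero z _ hz, hb2, hcomm e₀ z',
      hzero z' _ hz', add_zero, add_zero, smul_smul]
  -- w ≠ 0
  have hw0 : w ≠ 0 := by
    obtain ⟨x, y, hxy⟩ := hnonab
    obtain ⟨z, a, hz, rfl⟩ := decomp x
    obtain ⟨z', b, hz', rfl⟩ := decomp y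
    rw [hprod a b z z' hz hz'] at hxy
    intro h
    rw [h, smul_zero] at hxy
    exact hxy rfl
  -- w ∈ Z
  have hwZ : w ∈ Z := by
    obtain ⟨z, a, hz, hweq⟩ := decomp w
    by_cases ha : a = 0
    · rw [hweq, ha, zero_smul, add_zero]; exact hz
    · exfalso
      have hww : φ w w = (a * a) • w := by
        have h0 := hprod a a z z hz hz
        rw [← hweq] at h0
        exact h0
      have hmem : ∀ k, w ∈ lcs ℂ φ k := by
        intro k
        induction k with
        | zero => exact Submodule.mem_top
        | succ m ih =>
          have h1 : φ w w ∈ lcs ℂ φ (m + 1) := by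
            apply Submodule.subset_span
            exact ⟨w, ih, w, rfl⟩
          rw [hww] at h1
          have h2 := Submodule.smul_mem _ (a * a)⁻¹ h1
          rwa [smul_smul, inv_mul_cancel₀ (mul_ne_zero ha ha), one_smul] at h2
      obtain ⟨k, hk⟩ := hnilp
      have := hmem k
      rw [hk, Submodule.mem_bot] at this
      exact hw0 this
  -- build basis of Z with first vector w
  have hfinZ : FiniteDimensional ℂ Z := inferInstance
  set w' : Z := ⟨w, hwZ⟩ with hw'
  have hw'0 : w' ≠ 0 := by
    intro h
    exact hw0 (congrArg (Subtype.val) h)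
  obtain ⟨C, hC⟩ := Submodule.exists_isCompl (ℂ ∙ w')
  have hCdim : Module.finrank ℂ C = 2 := by
    have h1 := Submodule.finrank_add_eq_of_isCompl hC
    rw [finrank_span_singleton hw'0, hZdim] at h1
    omega
  let cC : Module.Basis (Fin 2) ℂ C := Module.finBasisOfFinrankEq ℂ C hCdim
  have hli1 : ∀ (c : ℂ), ∀ x ∈ C, c • w' + x = 0 → c = 0 := by
    intro c x hx hcx
    have h1 : c • w' ∈ (ℂ ∙ w') ⊓ C := by
      constructor
      · exact Submodule.smul_mem _ c (Submodule.mem_span_singleton_self w')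
      · have : c • w' = -x := by linear_combination (norm := abel) hcx
        rw [this]; exact C.neg_mem hx
    rw [hC.inf_eq_bot, Submodule.mem_bot, smul_eq_zero] at h1
    rcases h1 with h | h
    · exact h
    · exact absurd h hw'0
  have hsp1 : ∀ z : Z, ∃ c : ℂ, z + c • w' ∈ C := by
    intro z
    have hz : z ∈ (ℂ ∙ w') ⊔ C := by rw [hC.sup_eq_top]; exact Submodule.mem_top
    rw [Submodule.mem_sup] at hz
    obtain ⟨u, hu, v, hv, huv⟩ := hz
    rw [Submodule.mem_span_singleton] at hu
    obtain ⟨c, rfl⟩ := hu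
    refine ⟨-c, ?_⟩
    have : z + (-c) • w' = v := by
      rw [← huv]; rw [neg_smul]; abel
    rw [this]; exact hv
  let bZ : Module.Basis (Fin 3) ℂ Z := Module.Basis.mkFinCons w' cC hli1 hsp1
  have hbZ0 : bZ 0 = w' := by
    simp [bZ, Module.Basis.coe_mkFinCons]
  -- cons e₀ onto bZ
  have hli2 : ∀ (c : ℂ), ∀ x ∈ Z, c • e₀ + x = 0 → c = 0 := by
    intro c x hx hcx
    by_contra hc
    apply he₀
    have h1 : c • e₀ = -x := eq_neg_of_add_eq_zero_left hcx
    have he : e₀ = c⁻¹ • (-x) := by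
      rw [← h1, smul_smul, inv_mul_cancel₀ hc, one_smul]
    rw [he]
    exact Z.smul_mem _ (Z.neg_mem hx)
  have hsp2 : ∀ z : V, ∃ c : ℂ, z + c • e₀ ∈ Z := by
    intro z
    obtain ⟨zz, a, hzz, rfl⟩ := decomp z
    refine ⟨-a, ?_⟩
    have : zz + a • e₀ + (-a) • e₀ = zz := by rw [neg_smul]; abel
    rw [this]; exact hzz
  let bV : Module.Basis (Fin 4) ℂ V := Module.Basis.mkFinCons e₀ bZ hli2 hsp2
  have hbV : (bV : Fin 4 → V) = Fin.cons e₀ ((↑) ∘ bZ) := Module.Basis.coe_mkFinCons _ _ _ _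
  have hbV0 : bV 0 = e₀ := by rw [hbV]; rfl
  have hbV1 : bV 1 = w := by
    rw [hbV]
    show (Fin.cons e₀ ((↑) ∘ bZ) : Fin 4 → V) (Fin.succ 0) = w
    rw [Fin.cons_succ]
    simp [hbZ0, hw']
  have hmemZ : ∀ i : Fin 4, i ≠ 0 → bV i ∈ Z := by
    intro i hi
    induction i using Fin.cases with
    | zero => exact absurd rfl hi
    | succ j =>
      rw [hbV, Fin.cons_succ]
      exact (bZ j).2
  refine ⟨bV, ?_, ?_⟩
  · rw [hbV0, hbV1]
  · intro i j hij
    by_cases hi : i = 0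
    · have hj : j ≠ 0 := by
        intro h; exact hij (by rw [hi, h])
      rw [hcomm]
      exact hzero _ _ (hmemZ j hj)
    · exact hzero _ _ (hmemZ i hi)
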